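/- Let P, R_x be symmetric positive definite m×m matrices with eigenvalues υ₁ ≥ ... ≥ υ_m > 0 and γ₁ ≥ ... ≥ γ_m > 0 respectively, and suppose the condition number υ₁/υ_m of P is large in the following sense: for a fixed index r < m, if ε > υ_{r+1} γ₁ then the r-truncated eigenvalue sum of K = εP⁻¹ − R_x is strictly smaller than its full trace: Σ_{i=1}^r δ_i < Σ_{i=1}^m δ_i, where δ₁ ≤ ... ≤ δ_m are the eigenvalues of K. -/

import Mathlib

open Matrix

lemma aux_orth_dot {m : ℕ} (E : Matrix (Fin m) (Fin m) ℝ) (hE : Eᵀ * E = 1) (a b : Fin m → ℝ) :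
    (E *ᵥ a) ⬝ᵥ (E *ᵥ b) = a ⬝ᵥ b := by
  rw [Matrix.dotProduct_mulVec, ← Matrix.mulVec_transpose, Matrix.mulVec_mulVec, hE,
    Matrix.one_mulVec]

lemma aux_quad {m : ℕ} (E : Matrix (Fin m) (Fin m) ℝ) (hE : Eᵀ * E = 1) (δ d : Fin m → ℝ) :
    (E *ᵥ d) ⬝ᵥ ((E * Matrix.diagonal δ * Eᵀ) *ᵥ (E *ᵥ d)) = ∑ i, δ i * d i ^ 2 := by
  rw [Matrix.mulVec_mulVec, Matrix.mul_assoc, Matrix.mul_assoc, hE, Matrix.mul_one,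
    ← Matrix.mulVec_mulVec, aux_orth_dot E hE]
  simp [dotProduct, Matrix.mulVec_diagonal]
  exact Finset.sum_congr rfl fun i _ => by ring

lemma aux_eig_pos {m : ℕ} {P M : Matrix (Fin m) (Fin m) ℝ} {υ : Fin m → ℝ}
    (hP : P.PosDef) (hM : Mᵀ * M = 1) (hPeq : P = M * Matrix.diagonal υ * Mᵀ) (i : Fin m) :
    0 < υ i := by
  have hx : M *ᵥ Pi.single i 1 ≠ 0 := by
    intro h
    have h2 : (Mᵀ * M) *ᵥ Pi.single i 1 = 0 := by
      rw [← Matrix.mulVec_mulVec, h, Matrix.mulVec_zero]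
    rw [hM, Matrix.one_mulVec] at h2
    simpa using congrFun h2 i
  have h3 := hP.dotProduct_mulVec_pos hx
  rw [hPeq] at h3
  have h4 := aux_quad M hM υ (Pi.single i 1)
  simp only [star_trivial] at h3
  rw [h4] at h3
  simpa [Pi.single_apply, sq] using h3

theorem stmt19 {m : ℕ} (P Rx K : Matrix (Fin m) (Fin m) ℝ)
    (hP : P.PosDef) (hRx : Rx.PosDef) (ε : ℝ) (hε : 0 < ε)
    (r : ℕ) (hr1 : 1 ≤ r) (hrm : r < m)
    (υ γ δ : Fin m → ℝ)
    (MP NR E : Matrix (Fin m) (Fin m) ℝ)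
    (hMP : MP * MPᵀ = 1) (hPeq : P = MP * Matrix.diagonal υ * MPᵀ)
    (hυ : Antitone υ)
    (hNR : NR * NRᵀ = 1) (hRxeq : Rx = NR * Matrix.diagonal γ * NRᵀ)
    (hγ : Antitone γ)
    (hK : K = ε • P⁻¹ - Rx)
    (hE : E * Eᵀ = 1) (hKeq : K = E * Matrix.diagonal δ * Eᵀ)
    (hδ : Monotone δ)
    (hcond : ε > υ ⟨r, hrm⟩ * γ ⟨0, by omega⟩) :
    (∑ i : Fin m, if (i : ℕ) < r then δ i else 0) < ∑ i : Fin m, δ i := by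
  have hEt : Eᵀ * E = 1 := mul_eq_one_comm.mp hE
  have hMPt : MPᵀ * MP = 1 := mul_eq_one_comm.mp hMP
  have hNRt : NRᵀ * NR = 1 := mul_eq_one_comm.mp hNR
  have hυpos : ∀ i, 0 < υ i := fun i => aux_eig_pos hP hMPt hPeq i
  have hγ0pos : 0 < γ ⟨0, by omega⟩ := aux_eig_pos hRx hNRt hRxeq _
  -- P⁻¹
  have hPinv : P⁻¹ = MP * Matrix.diagonal (fun i => (υ i)⁻¹) * MPᵀ := by
    apply Matrix.inv_eq_right_inv
    rw [hPeq]
    simp only [Matrix.mul_assoc]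
    rw [← Matrix.mul_assoc MPᵀ MP, hMPt, Matrix.one_mul,
      ← Matrix.mul_assoc (Matrix.diagonal υ), Matrix.diagonal_mul_diagonal]
    have hone : (fun i => υ i * (υ i)⁻¹) = fun _ : Fin m => (1 : ℝ) :=
      funext fun i => mul_inv_cancel₀ (hυpos i).ne'
    rw [hone, Matrix.diagonal_one, Matrix.one_mul, hMP]
  -- key: δ at index r is positive
  have hδr : 0 < δ ⟨r, hrm⟩ := by
    by_contra hcon
    push_neg at hcon
    let ext : (Fin (r + 1) → ℝ) →ₗ[ℝ] (Fin m → ℝ) :=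
      { toFun := fun c i => if h : (i : ℕ) < r + 1 then c ⟨i, h⟩ else 0
        map_add' := by intro a b; funext i; by_cases h : (i : ℕ) < r + 1 <;> (rw [Nat.lt_add_one_iff] at h; simp [h])
        map_smul' := by intro s a; funext i; by_cases h : (i : ℕ) < r + 1 <;> (rw [Nat.lt_add_one_iff] at h; simp [h]) }
    let res : (Fin m → ℝ) →ₗ[ℝ] (Fin r → ℝ) :=
      LinearMap.funLeft ℝ ℝ (Fin.castLE (by omega))
    let T := res ∘ₗ MPᵀ.mulVecLin ∘ₗ E.mulVecLin ∘ₗ ext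
    have hTnotinj : ¬ Function.Injective T := by
      intro h
      have h2 := LinearMap.finrank_le_finrank_of_injective h
      rw [Module.finrank_fin_fun, Module.finrank_fin_fun] at h2
      omega
    obtain ⟨a, b, hab, hne⟩ := Function.not_injective_iff.mp hTnotinj
    set c := a - b with hcdef
    have hc0 : c ≠ 0 := sub_ne_zero.mpr hne
    have hTc : T c = 0 := by rw [hcdef, map_sub, hab, sub_self]
    set d := ext c with hddef
    set x := E *ᵥ d with hxdef
    set e := MPᵀ *ᵥ x with hedef
    set f := NRᵀ *ᵥ x with hfdef
    have hxe : x = MP *ᵥ e := by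
      rw [hedef, Matrix.mulVec_mulVec, hMP, Matrix.one_mulVec]
    have hxf : x = NR *ᵥ f := by
      rw [hfdef, Matrix.mulVec_mulVec, hNR, Matrix.one_mulVec]
    have he0 : ∀ j : Fin m, (j : ℕ) < r → e j = 0 := by
      intro j hj
      have h2 := congrFun hTc ⟨(j : ℕ), hj⟩
      have h3 : Fin.castLE (by omega : r ≤ m) ⟨(j : ℕ), hj⟩ = j := by
        apply Fin.ext; rfl
      rw [hedef, Matrix.mulVec_transpose]
      simpa [T, res, LinearMap.funLeft, Matrix.mulVecLin, h3, ← hddef, ← hxdef, ← hedef]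
        using h2
    have hd0 : d ≠ 0 := by
      intro h
      apply hc0
      funext j
      have h2 := congrFun h (Fin.castLE (by omega : r + 1 ≤ m) j)
      have hj : ((Fin.castLE (by omega : r + 1 ≤ m) j : Fin m) : ℕ) < r + 1 := j.isLt
      simpa [hddef, ext, hj, Nat.lt_add_one_iff.mp j.isLt] using h2
    have hdd : 0 < d ⬝ᵥ d := by
      have hnn : 0 ≤ d ⬝ᵥ d := Finset.sum_nonneg fun i _ => mul_self_nonneg (d i)
      rcases hnn.lt_or_eq with h | h
      · exact h
      · exact absurd (dotProduct_self_eq_zero.mp h.symm) hd0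
    have hxx : x ⬝ᵥ x = d ⬝ᵥ d := aux_orth_dot E hEt d d
    have hee : e ⬝ᵥ e = d ⬝ᵥ d := by
      rw [← hxx]
      conv_rhs => rw [hxe]
      exact (aux_orth_dot MP hMPt e e).symm
    have hff : f ⬝ᵥ f = d ⬝ᵥ d := by
      rw [← hxx]
      conv_rhs => rw [hxf]
      exact (aux_orth_dot NR hNRt f f).symm
    have hq1 : x ⬝ᵥ (K *ᵥ x) = ∑ i, δ i * d i ^ 2 := by
      rw [hKeq]; exact aux_quad E hEt δ d
    have hq1le : x ⬝ᵥ (K *ᵥ x) ≤ 0 := by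
      rw [hq1]
      apply Finset.sum_nonpos
      intro i _
      by_cases hi : (i : ℕ) < r + 1
      · have hle : i ≤ (⟨r, hrm⟩ : Fin m) := by
          simp only [Fin.le_def]
          omega
        exact mul_nonpos_of_nonpos_of_nonneg (le_trans (hδ hle) hcon) (sq_nonneg _)
      · have hdi : d i = 0 := by simp [hddef, ext, hi, Nat.lt_add_one_iff.not.mp hi]
        simp [hdi]
    have hq2 : x ⬝ᵥ (K *ᵥ x) = ε * (x ⬝ᵥ (P⁻¹ *ᵥ x)) - x ⬝ᵥ (Rx *ᵥ x) := by
      rw [hK, Matrix.sub_mulVec, dotProduct_sub, Matrix.smul_mulVec, dotProduct_smul,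
        smul_eq_mul]
    have hPq : x ⬝ᵥ (P⁻¹ *ᵥ x) = ∑ i, (υ i)⁻¹ * e i ^ 2 := by
      rw [hPinv]
      conv_lhs => rw [hxe]
      exact aux_quad MP hMPt _ e
    have hRq : x ⬝ᵥ (Rx *ᵥ x) = ∑ j, γ j * f j ^ 2 := by
      rw [hRxeq]
      conv_lhs => rw [hxf]
      exact aux_quad NR hNRt γ f
    have hsume : ∑ i, e i ^ 2 = e ⬝ᵥ e := by simp [dotProduct, sq]
    have hsumf : ∑ j, f j ^ 2 = f ⬝ᵥ f := by simp [dotProduct, sq]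
    have hbP : (υ ⟨r, hrm⟩)⁻¹ * (d ⬝ᵥ d) ≤ ∑ i, (υ i)⁻¹ * e i ^ 2 := by
      rw [← hee, ← hsume, Finset.mul_sum]
      apply Finset.sum_le_sum
      intro i _
      by_cases hi : (i : ℕ) < r
      · simp [he0 i hi]
      · have hle : (⟨r, hrm⟩ : Fin m) ≤ i := by
          simp only [Fin.le_def]; omega
        exact mul_le_mul_of_nonneg_right (inv_anti₀ (hυpos i) (hυ hle)) (sq_nonneg _)
    have hbR : ∑ j, γ j * f j ^ 2 ≤ γ ⟨0, by omega⟩ * (d ⬝ᵥ d) := by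
      rw [← hff, ← hsumf, Finset.mul_sum]
      apply Finset.sum_le_sum
      intro j _
      have hle : (⟨0, by omega⟩ : Fin m) ≤ j := by
        simp only [Fin.le_def]; omega
      exact mul_le_mul_of_nonneg_right (hγ hle) (sq_nonneg _)
    have hratio : γ ⟨0, by omega⟩ < ε * (υ ⟨r, hrm⟩)⁻¹ := by
      rw [mul_comm, ← div_eq_inv_mul, lt_div_iff₀ (hυpos _)]
      linarith [hcond]
    have hfin : (0 : ℝ) < x ⬝ᵥ (K *ᵥ x) := by
      rw [hq2, hPq, hRq]
      nlinarith [mul_le_mul_of_nonneg_left hbP hε.le,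
        mul_lt_mul_of_pos_right hratio hdd, hbR, hdd]
    linarith
  -- conclude
  have hstep : ∀ i : Fin m, i ∈ Finset.univ → (if (i : ℕ) < r then δ i else 0) ≤ δ i := by
    intro i _
    by_cases hi : (i : ℕ) < r
    · simp [hi]
    · have hle : (⟨r, hrm⟩ : Fin m) ≤ i := by simp only [Fin.le_def]; omega
      simp only [hi, if_false]
      exact le_of_lt (lt_of_lt_of_le hδr (hδ hle))
  refine Finset.sum_lt_sum hstep ⟨⟨r, hrm⟩, Finset.mem_univ _, ?_⟩
  simpa using hδr
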